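/- Let N ≥ 1, let L ≥ 1 divide N, let F be the N × N unitary DFT matrix, and let H be the N × N block-diagonal local Fourier matrix with N/L diagonal blocks each equal to the L × L unitary DFT matrix. Suppose y = F x_p + H x_q with K_p := ‖x_p‖₀ ≥ 1, K_q := ‖x_q‖₀ ≥ 1, and (2K_p + L − 1) K_q < N. Then there exists ℓ ∈ {0, …, N−1} such that y_{(ℓ+j) mod N} = (F x_p)_{(ℓ+j) mod N} for all j = 0, 1, …, 2K_p − 1; moreover, x_p is the unique vector in ℂ^N with at most K_p nonzero entries whose DFT agrees with y on this cyclic window. -/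
import Mathlib


/-- The `N × N` unitary DFT matrix, `F n m = exp (2πi n m / N) / √N`. -/
noncomputable def dft (N : ℕ) : Matrix (Fin N) (Fin N) ℂ :=
  fun n m => Complex.exp (2 * Real.pi * Complex.I * (n : ℕ) * (m : ℕ) / N) / (Real.sqrt N : ℂ)

/-- The `N × N` block-diagonal local Fourier matrix with `N / L` diagonal blocks, each equal
to the `L × L` unitary DFT matrix: its `(n, m)` entry is
`exp (2πi (n mod L)(m mod L) / L) / √L` if `n` and `m` lie in the same length-`L` block,
and `0` otherwise. -/
noncomputable def localdft (N L : ℕ) : Matrix (Fin N) (Fin N) ℂ :=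
  fun n m =>
    if (n : ℕ) / L = (m : ℕ) / L then
      Complex.exp (2 * Real.pi * Complex.I * ((n : ℕ) % L) * ((m : ℕ) % L) / L) /
        (Real.sqrt L : ℂ)
    else 0

open scoped Classical in
/-- The number of nonzero entries (the "ℓ₀ norm") of a vector. -/
noncomputable def l0 {ι : Type*} [Fintype ι] (x : ι → ℂ) : ℕ :=
  (Finset.univ.filter (fun i => x i ≠ 0)).card

namespace ProSparse

noncomputable def w (N : ℕ) : ℂ := Complex.exp (2 * Real.pi * Complex.I / N)

lemma w_pow (N a : ℕ) : w N ^ a = Complex.exp (2 * Real.pi * Complex.I * a / N) := by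
  rw [w, ← Complex.exp_nat_mul]
  congr 1
  ring

lemma w_pow_N (N : ℕ) (hN : N ≠ 0) : w N ^ N = 1 :=
  (Complex.isPrimitiveRoot_exp N hN).pow_eq_one

lemma w_pow_mod (N : ℕ) (hN : N ≠ 0) (a : ℕ) : w N ^ (a % N) = w N ^ a := by
  conv_rhs => rw [← Nat.div_add_mod a N]
  rw [pow_add, pow_mul, w_pow_N N hN, one_pow, one_mul]

lemma w_pow_congr (N : ℕ) (hN : N ≠ 0) {a b : ℕ} (h : a % N = b % N) :
    w N ^ a = w N ^ b := by
  rw [← w_pow_mod N hN a, h, w_pow_mod N hN b]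

lemma w_ne_zero (N : ℕ) : w N ≠ 0 := Complex.exp_ne_zero _

lemma dft_mulVec (N : ℕ) (d : Fin N → ℂ) (n : Fin N) :
    (dft N).mulVec d n = (∑ m : Fin N, w N ^ ((n : ℕ) * (m : ℕ)) * d m) / (Real.sqrt N : ℂ) := by
  rw [Matrix.mulVec, dotProduct, Finset.sum_div]
  refine Finset.sum_congr rfl fun m _ => ?_
  rw [dft, w_pow]
  rw [div_mul_eq_mul_div]
  congr 3
  push_cast
  ring

lemma l0_eq_card {ι : Type*} [Fintype ι] (d : ι → ℂ) [DecidablePred (fun i : ι => d i ≠ 0)] :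
    l0 d = (Finset.univ.filter (fun i => d i ≠ 0)).card := by
  rw [l0]
  congr 1
  exact Finset.filter_congr_decidable _ _ _

lemma window_vanish {N K : ℕ} (hN : 0 < N) (ℓ : ℕ)
    (d : Fin N → ℂ) (hd : l0 d ≤ K)
    (h : ∀ j < K, (dft N).mulVec d ⟨(ℓ + j) % N, Nat.mod_lt _ hN⟩ = 0) :
    d = 0 := by
  classical
  have hNne : N ≠ 0 := hN.ne'
  set s : Finset (Fin N) := Finset.univ.filter (fun i => d i ≠ 0) with hs
  have hk : s.card ≤ K := by rw [← l0_eq_card] at *; exact hd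
  set k := s.card with hkdef
  let e : Fin k ≃ s := s.equivFin.symm
  set g : Fin k → Fin N := fun i => ((e i : s) : Fin N) with hg
  have hginj : Function.Injective g := by
    intro i j hij
    exact e.injective (Subtype.ext hij)
  have hprim := Complex.isPrimitiveRoot_exp N hNne
  set f : Fin k → ℂ := fun i => w N ^ ((g i : Fin N) : ℕ) with hf
  have hfinj : Function.Injective f := by
    intro i j hij
    apply hginj
    exact Fin.ext (hprim.pow_inj (g i).isLt (g j).isLt hij)
  set v : Fin k → ℂ := fun i => w N ^ (ℓ * ((g i : Fin N) : ℕ)) * d (g i) with hv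
  have hsqrt : (Real.sqrt N : ℂ) ≠ 0 := by
    simp only [ne_eq, Complex.ofReal_eq_zero]
    positivity
  have key : ∀ i : Fin k, ∑ j, v j * f j ^ (i : ℕ) = 0 := by
    intro i
    have hiK : (i : ℕ) < K := lt_of_lt_of_le i.isLt hk
    have h0 := h i hiK
    rw [dft_mulVec, div_eq_zero_iff] at h0
    have hsum : ∑ m : Fin N, w N ^ ((((ℓ + i) % N)) * (m : ℕ)) * d m = 0 := by
      rcases h0 with h0 | h0
      · exact h0
      · exact absurd h0 hsqrt
    have hsum2 : ∑ m ∈ s, w N ^ ((((ℓ + i) % N)) * (m : ℕ)) * d m = 0 := by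
      rw [Finset.sum_subset s.subset_univ]
      · exact hsum
      · intro m _ hm
        have : d m = 0 := by
          by_contra hdm
          exact hm (by simp [hs, hdm])
        simp [this]
    calc ∑ j, v j * f j ^ (i : ℕ)
        = ∑ j, w N ^ ((((ℓ + i) % N)) * ((g j : Fin N) : ℕ)) * d (g j) := by
          refine Finset.sum_congr rfl fun j _ => ?_
          have hw : w N ^ (ℓ * ((g j : Fin N) : ℕ)) * (w N ^ ((g j : Fin N) : ℕ)) ^ (i : ℕ)
              = w N ^ ((((ℓ + i) % N)) * ((g j : Fin N) : ℕ)) := by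
            rw [← pow_mul, ← pow_add]
            apply w_pow_congr N hNne
            have h1 : ℓ * ((g j : Fin N) : ℕ) + ((g j : Fin N) : ℕ) * (i : ℕ)
                = (ℓ + (i : ℕ)) * ((g j : Fin N) : ℕ) := by ring
            rw [h1]
            exact ((Nat.mod_modEq (ℓ + (i : ℕ)) N).mul_right _).symm
          calc v j * f j ^ (i : ℕ)
              = (w N ^ (ℓ * ((g j : Fin N) : ℕ)) * (w N ^ ((g j : Fin N) : ℕ)) ^ (i : ℕ)) * d (g j) := by
                rw [hv, hf]; ring
            _ = w N ^ ((((ℓ + i) % N)) * ((g j : Fin N) : ℕ)) * d (g j) := by rw [hw]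
      _ = ∑ m ∈ s, w N ^ ((((ℓ + i) % N)) * (m : ℕ)) * d m := by
          exact (Equiv.sum_comp e fun x : s =>
            w N ^ ((((ℓ + i) % N)) * ((x : Fin N) : ℕ)) * d x).trans (Finset.sum_coe_sort s (fun m : Fin N => w N ^ ((((ℓ + i) % N)) * (m : ℕ)) * d m))
      _ = 0 := hsum2
  have hv0 : v = 0 := Matrix.eq_zero_of_forall_pow_sum_mul_pow_eq_zero hfinj key
  funext m
  simp only [Pi.zero_apply]
  by_contra hm
  have hms : m ∈ s := by simp [hs, hm]
  have : d (g (e.symm ⟨m, hms⟩)) = 0 := by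
    have := congrFun hv0 (e.symm ⟨m, hms⟩)
    simp only [hv, Pi.zero_apply, mul_eq_zero] at this
    rcases this with h' | h'
    · exact absurd h' (pow_ne_zero _ (w_ne_zero N))
    · exact h'
  rw [hg] at this
  simp only [Equiv.apply_symm_apply] at this
  exact hm this

lemma l0_sub_le {ι : Type*} [Fintype ι] (c x : ι → ℂ) : l0 (c - x) ≤ l0 c + l0 x := by
  classical
  rw [l0_eq_card, l0_eq_card, l0_eq_card]
  refine le_trans (Finset.card_le_card ?_) (Finset.card_union_le _ _)
  intro i hi
  simp only [Finset.mem_filter, Finset.mem_union, Finset.mem_univ, true_and, Pi.sub_apply] at *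
  by_contra hcon
  push_neg at hcon
  exact hi (by rw [hcon.1, hcon.2, sub_zero])

end ProSparse

open ProSparse

/-- **ProSparse recovery guarantee for Fourier plus local Fourier.** Let `L ∣ N`, `F` the
`N × N` unitary DFT matrix and `H` the block-diagonal local Fourier matrix with `N / L` blocks
`F_L`. If `y = F x_p + H x_q` with `K_p = ‖x_p‖₀ ≥ 1`, `K_q = ‖x_q‖₀ ≥ 1` and
`(2 K_p + L - 1) K_q < N`, then there exists `ℓ ∈ {0, …, N-1}` such that `y` agrees with
`F x_p` on the cyclic window of length `2 K_p` starting at `ℓ`; moreover `x_p` is the unique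
vector with at most `K_p` nonzero entries whose DFT agrees with `y` on that window. -/
theorem stmt19 (N L : ℕ) (hN : 1 ≤ N) (hL : 1 ≤ L) (hdvd : L ∣ N)
    (xp xq : Fin N → ℂ) (Kp Kq : ℕ)
    (hKp : l0 xp = Kp) (hKq : l0 xq = Kq) (hKp1 : 1 ≤ Kp) (hKq1 : 1 ≤ Kq)
    (hbound : (2 * Kp + L - 1) * Kq < N)
    (y : Fin N → ℂ) (hy : y = (dft N).mulVec xp + (localdft N L).mulVec xq) :
    ∃ ℓ < N,
      (∀ j < 2 * Kp,
        y ⟨(ℓ + j) % N, Nat.mod_lt _ (by omega)⟩ =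
          (dft N).mulVec xp ⟨(ℓ + j) % N, Nat.mod_lt _ (by omega)⟩) ∧
      (∀ c : Fin N → ℂ, l0 c ≤ Kp →
        (∀ j < 2 * Kp,
          (dft N).mulVec c ⟨(ℓ + j) % N, Nat.mod_lt _ (by omega)⟩ =
            y ⟨(ℓ + j) % N, Nat.mod_lt _ (by omega)⟩) →
        c = xp) := by
  classical
  have h2Kp : 2 * Kp < N := by
    have h1 : 2 * Kp ≤ 2 * Kp + L - 1 := by omega
    have h2 : 2 * Kp + L - 1 ≤ (2 * Kp + L - 1) * Kq := Nat.le_mul_of_pos_right _ hKq1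
    omega
  set Hq := (localdft N L).mulVec xq with hHq
  have hsupp : ∀ n : Fin N, Hq n ≠ 0 → ∃ m : Fin N, xq m ≠ 0 ∧ (n : ℕ) / L = (m : ℕ) / L := by
    intro n hn
    rw [hHq, Matrix.mulVec, dotProduct] at hn
    obtain ⟨m, _, hm⟩ := Finset.exists_ne_zero_of_sum_ne_zero hn
    refine ⟨m, ?_, ?_⟩
    · intro h0; rw [h0, mul_zero] at hm; exact hm rfl
    · by_contra hc
      rw [localdft] at hm
      simp [hc] at hm
  set sq : Finset (Fin N) := Finset.univ.filter (fun i => xq i ≠ 0) with hsq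
  have hsqcard : sq.card = Kq := by rw [← hKq, l0_eq_card]
  set Bad : Finset ℕ := sq.biUnion (fun m =>
    (Finset.range (2 * Kp + L - 1)).image
      (fun t => ((m : ℕ) / L * L + N + 1 + t - 2 * Kp) % N)) with hBad
  have hBadcard : Bad.card < N := by
    calc Bad.card ≤ ∑ m ∈ sq, ((Finset.range (2 * Kp + L - 1)).image
          (fun t => ((m : ℕ) / L * L + N + 1 + t - 2 * Kp) % N)).card :=
        Finset.card_biUnion_le
      _ ≤ ∑ _m ∈ sq, (2 * Kp + L - 1) :=
        Finset.sum_le_sum fun m _ => le_trans Finset.card_image_le (by simp)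
      _ = Kq * (2 * Kp + L - 1) := by rw [Finset.sum_const, hsqcard, smul_eq_mul]
      _ < N := by rw [mul_comm]; exact hbound
  obtain ⟨ℓ, hℓN, hℓBad⟩ : ∃ ℓ < N, ℓ ∉ Bad := by
    by_contra hc
    push_neg at hc
    have hsub : Finset.range N ⊆ Bad := fun t ht => hc t (Finset.mem_range.mp ht)
    have := Finset.card_le_card hsub
    rw [Finset.card_range] at this
    omega
  have hzero : ∀ j < 2 * Kp, Hq ⟨(ℓ + j) % N, Nat.mod_lt _ (by omega)⟩ = 0 := by
    intro j hj
    by_contra hne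
    obtain ⟨m, hxm, hdiv⟩ := hsupp _ hne
    apply hℓBad
    rw [hBad]
    refine Finset.mem_biUnion.mpr ⟨m, by simp [hsq, hxm], ?_⟩
    refine Finset.mem_image.mpr ?_
    set n : ℕ := (ℓ + j) % N with hn
    have hnN : n < N := Nat.mod_lt _ (by omega)
    set r : ℕ := n % L with hr
    have hrL : r < L := Nat.mod_lt _ hL
    have hnd : n / L = (m : ℕ) / L := hdiv
    have hn_eq : (m : ℕ) / L * L + r = n := by
      rw [← hnd, hr, Nat.mul_comm]
      exact Nat.div_add_mod n L
    refine ⟨r + (2 * Kp - 1 - j), Finset.mem_range.mpr (by omega), ?_⟩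
    have harg : (m : ℕ) / L * L + N + 1 + (r + (2 * Kp - 1 - j)) - 2 * Kp
        = ((m : ℕ) / L * L + r) + (N - j) := by omega
    rw [harg]
    have mod1 : ((m : ℕ) / L * L + r) ≡ ℓ + j [MOD N] := by
      rw [hn_eq, hn]
      exact Nat.mod_modEq _ _
    have mod2 := mod1.add_right (N - j)
    have heq : ℓ + j + (N - j) = ℓ + N := by omega
    rw [Nat.ModEq] at mod2
    rw [mod2, heq, Nat.add_mod_right, Nat.mod_eq_of_lt hℓN]
  have hwin : ∀ j < 2 * Kp, ∀ (hp : (ℓ + j) % N < N),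
      y ⟨(ℓ + j) % N, hp⟩ = (dft N).mulVec xp ⟨(ℓ + j) % N, hp⟩ := by
    intro j hj hp
    rw [hy, Pi.add_apply, hzero j hj, add_zero]
  refine ⟨ℓ, hℓN, fun j hj => hwin j hj _, ?_⟩
  intro c hc hagree
  have hd : l0 (c - xp) ≤ 2 * Kp := by
    have := l0_sub_le c xp
    omega
  have hvan : ∀ j < 2 * Kp,
      (dft N).mulVec (c - xp) ⟨(ℓ + j) % N, Nat.mod_lt _ (by omega)⟩ = 0 := by
    intro j hj
    rw [Matrix.mulVec_sub, Pi.sub_apply, hagree j hj, hwin j hj, sub_self]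
  have hzero' := window_vanish (K := 2 * Kp) (by omega) ℓ (c - xp) hd hvan
  have := sub_eq_zero.mp hzero'
  exact this
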